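/- Let C be a category and let F : C → Ab be a covariant functor whose composition with the forgetful functor Ab → Set is representable, i.e., naturally isomorphic to Mor_C(Y, ·) for some object Y of C. Then every finite homogeneous functorial semi-norm on F is trivial: for every object X and every α ∈ F(X) one has |α| = 0. -/

import Mathlib

open CategoryTheory

universe u v

/-- A finite functorial semi-norm on a functor `F : C ⥤ Ab`. -/
structure FunctorialSeminorm {C : Type u} [Category.{v} C] (F : C ⥤ AddCommGrpCat.{v}) where
  ν : ∀ X : C, F.obj X → ℝ
  nonneg : ∀ (X : C) (x : F.obj X), 0 ≤ ν X x
  map_zero : ∀ X : C, ν X 0 = 0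
  map_neg : ∀ (X : C) (x : F.obj X), ν X (-x) = ν X x
  add_le : ∀ (X : C) (x y : F.obj X), ν X (x + y) ≤ ν X x + ν X y
  functorial : ∀ {X Y : C} (f : X ⟶ Y) (x : F.obj X), ν Y (F.map f x) ≤ ν X x

/-- Homogeneity of a functorial semi-norm. -/
def FunctorialSeminorm.Homogeneous {C : Type u} [Category.{v} C] {F : C ⥤ AddCommGrpCat.{v}}
    (N : FunctorialSeminorm F) : Prop :=
  ∀ (X : C) (n : ℤ), n ≠ 0 → ∀ x : F.obj X, N.ν X (n • x) = |(n : ℝ)| * N.ν X x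

/-- Every finite homogeneous functorial semi-norm on a representable covariant
functor `F : C ⥤ Ab` is trivial. -/
theorem seminorm_trivial_of_representable_covariant {C : Type u} [Category.{v} C]
    (F : C ⥤ AddCommGrpCat.{v}) (Y : C)
    (η : coyoneda.obj (Opposite.op Y) ≅ F ⋙ forget AddCommGrpCat.{v})
    (N : FunctorialSeminorm F) (hN : N.Homogeneous) :
    ∀ (X : C) (α : F.obj X), N.ν X α = 0 := by
  intro X α
  set u : F.obj Y := η.hom.app Y (𝟙 Y) with hu
  -- every element of F.obj X is in the image of F.map applied to u
  have key : ∀ (β : F.obj X), ∃ g : Y ⟶ X, F.map g u = β := by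
    intro β
    refine ⟨η.inv.app X β, ?_⟩
    have h1 := ConcreteCategory.congr_hom (η.hom.naturality (η.inv.app X β)) (𝟙 Y)
    simp only [types_comp_apply, Functor.flip_obj_obj, Functor.comp_obj, Functor.flip_obj_map, yoneda_map_app,
      Category.id_comp, Functor.comp_map, TypeCat.ofHom_apply] at h1
    have h2 := ConcreteCategory.congr_hom (η.inv_hom_id_app X) β
    simp only [Functor.comp_obj, NatTrans.comp_app, types_comp_apply, NatTrans.id_app,
      types_id_apply] at h2 ⊢
    rw [h1] at h2
    exact h2
  have bound : ∀ (β : F.obj X), N.ν X β ≤ N.ν Y u := by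
    intro β
    obtain ⟨g, hg⟩ := key β
    calc N.ν X β = N.ν X (F.map g u) := by rw [hg]
    _ ≤ N.ν Y u := N.functorial g u
  have hnn := N.nonneg X α
  by_contra h
  have hpos : 0 < N.ν X α := lt_of_le_of_ne hnn (Ne.symm h)
  obtain ⟨n, hn⟩ := exists_nat_gt (N.ν Y u / N.ν X α)
  have hn1 : (n : ℤ) + 1 ≠ 0 := by positivity
  have := hN X ((n : ℤ) + 1) hn1 α
  have hb := bound (((n : ℤ) + 1) • α)
  rw [this] at hb
  have habs : |(((n : ℤ) + 1 : ℤ) : ℝ)| = (n : ℝ) + 1 := by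
    push_cast
    rw [abs_of_pos]; positivity
  rw [habs] at hb
  have : (n : ℝ) + 1 ≤ N.ν Y u / N.ν X α := (le_div_iff₀ hpos).mpr hb
  linarith [hn]
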